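/- Let q be a prime power, k a positive integer, R = M_k(F_q), and A = M_{k×ℓ}(F_q) the left R-module of k×ℓ matrices over F_q, where ℓ > k. Then there exist a positive integer n, an R-submodule C ⊆ A^n, and an injective R-linear map f : C → A^n such that for every a ∈ C and every b ∈ A one has #{i ∈ {1,…,n} : a_i = b} = #{i ∈ {1,…,n} : f(a)_i = b} (hence f is an swc_G-isometry for every subgroup G of Aut_R(A)), yet there is no permutation π of {1,…,n} and no g_1,…,g_n ∈ Aut_R(A) with f(a) = (g_1(a_{π(1)}),…,g_n(a_{π(n)})) for all a ∈ C. -/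

import Mathlib

variable (F : Type) [Field F] [Fintype F] (k m : ℕ)

/-- The matrix module `M = M_{k×m}(F)` as a left module over `R = M_{k×k}(F)`
via matrix multiplication. -/
instance matSMul : SMul (Matrix (Fin k) (Fin k) F) (Matrix (Fin k) (Fin m) F) :=
  ⟨fun A X => A * X⟩

instance matModule : Module (Matrix (Fin k) (Fin k) F) (Matrix (Fin k) (Fin m) F) where
  one_smul X := Matrix.one_mul X
  mul_smul A B X := Matrix.mul_assoc A B X
  smul_zero A := Matrix.mul_zero A
  smul_add A X Y := Matrix.mul_add A X Y
  add_smul A B X := Matrix.add_mul A B X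
  zero_smul X := Matrix.zero_mul X

instance matTower :
    IsScalarTower F (Matrix (Fin k) (Fin k) F) (Matrix (Fin k) (Fin m) F) :=
  ⟨fun c A X => Matrix.smul_mul c A X⟩

noncomputable instance :
    Fintype (Submodule (Matrix (Fin k) (Fin k) F) (Matrix (Fin k) (Fin m) F)) :=
  Fintype.ofFinite _

/-- The dimension of an `R`-submodule `U ⊆ M`, i.e. `dim_{F_q}(U) / k`. -/
noncomputable def dimk
    (U : Submodule (Matrix (Fin k) (Fin k) F) (Matrix (Fin k) (Fin m) F)) : ℕ :=
  Module.finrank F (U.restrictScalars F) / k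

open Classical in
/-- `η_V(U) = (−1)^(dim V − dim U) · q^(binom(dim V − dim U, 2))` if `U ⊆ V`, else `0`. -/
noncomputable def etaV
    (V U : Submodule (Matrix (Fin k) (Fin k) F) (Matrix (Fin k) (Fin m) F)) : ℚ :=
  if U ≤ V then
    (-1 : ℚ) ^ (dimk F k m V - dimk F k m U) *
      (Fintype.card F : ℚ) ^ ((dimk F k m V - dimk F k m U).choose 2)
  else 0

section Construction

variable [DecidableEq F]

instance matUnitDec (n : ℕ) :
    DecidablePred (IsUnit : Matrix (Fin n) (Fin n) F → Prop) := fun Q =>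
  decidable_of_iff (Q.det ≠ 0)
    ((isUnit_iff_ne_zero).symm.trans (Matrix.isUnit_iff_isUnit_det Q).symm)

variable (l : ℕ)

/-- Padding matrix `E : M_{(k+1)×l}` with `1`s on the "diagonal". -/
def padE : Matrix (Fin (k + 1)) (Fin l) F :=
  fun a j => if (a : ℕ) = (j : ℕ) then 1 else 0

lemma padE_apply_eq {r : ℕ} (M : Matrix (Fin r) (Fin (k + 1)) F) (i : Fin r)
    (a : Fin (k + 1)) (j : Fin l) (hj : (j : ℕ) = (a : ℕ)) :
    (M * padE F k l) i j = M i a := by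
  classical
  rw [Matrix.mul_apply, Finset.sum_eq_single a]
  · simp [padE, hj.symm]
  · intro c _ hc
    have : ¬ ((c : ℕ) = (j : ℕ)) := by
      rw [hj]; exact fun h => hc (Fin.ext h)
    simp [padE, this]
  · simp

lemma padE_mul_inj {r : ℕ} (hl : k < l) {M N : Matrix (Fin r) (Fin (k + 1)) F}
    (h : M * padE F k l = N * padE F k l) : M = N := by
  ext i a
  have hlt : (a : ℕ) < l := lt_of_lt_of_le a.2 hl
  have := congrFun (congrFun h i) ⟨(a : ℕ), hlt⟩
  rwa [padE_apply_eq F k l M i a ⟨(a : ℕ), hlt⟩ rfl,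
    padE_apply_eq F k l N i a ⟨(a : ℕ), hlt⟩ rfl] at this

/-- The weight: number of invertible `Q` with `tr(PQ) = t`. -/
def wt (t : F) (P : Matrix (Fin (k + 1)) (Fin (k + 1)) F) : ℕ :=
  (Finset.univ.filter fun Q : Matrix (Fin (k + 1)) (Fin (k + 1)) F =>
    IsUnit Q ∧ (P * Q).trace = t).card

lemma wt_eq_sum (t : F) (P : Matrix (Fin (k + 1)) (Fin (k + 1)) F) :
    wt F k t P = ∑ Q : Matrix (Fin (k + 1)) (Fin (k + 1)) F,
      if IsUnit Q ∧ (P * Q).trace = t then 1 else 0 :=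
  Finset.card_filter _ _

/-- Index type for the code with parameter `t`. -/
abbrev Idx (t : F) : Type :=
  (Σ P : Matrix (Fin (k + 1)) (Fin (k + 1)) F, Fin (wt F k t P)) ⊕ Unit

/-- Coordinate matrix attached to an index. -/
def coordP (t : F) : Idx F k t → Matrix (Fin (k + 1)) (Fin (k + 1)) F :=
  Sum.elim Sigma.fst (fun _ => 1)

lemma card_Idx (t : F) :
    Fintype.card (Idx F k t) = (∑ P, wt F k t P) + 1 := by
  simp [Idx]

/-- The coordinate evaluation linear map. -/
def codeMap (n : ℕ) (c : Fin n → Matrix (Fin (k + 1)) (Fin (k + 1)) F) :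
    Matrix (Fin k) (Fin (k + 1)) F →ₗ[Matrix (Fin k) (Fin k) F]
      (Fin n → Matrix (Fin k) (Fin l) F) where
  toFun X := fun i => X * (c i * padE F k l)
  map_add' X Y := by funext i; exact Matrix.add_mul X Y _
  map_smul' Y X := by
    funext i
    show (Y * X) * _ = Y * (X * _)
    rw [Matrix.mul_assoc]

lemma codeMap_inj {n : ℕ} (hl : k < l) (c : Fin n → Matrix (Fin (k + 1)) (Fin (k + 1)) F)
    (i0 : Fin n) (hc : c i0 = 1) : Function.Injective (codeMap F k l n c) := by
  intro X Y h
  have h0 := congrFun h i0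
  simp only [codeMap, LinearMap.coe_mk, AddHom.coe_mk, hc, Matrix.one_mul] at h0
  exact padE_mul_inj F k l hl h0

/-- The key counting identity: for every `X` (which always has a nontrivial kernel)
and every `b`, the weighted fiber counts with `t = 0` and `t = 1` agree. -/
lemma key_count (X : Matrix (Fin k) (Fin (k + 1)) F) (b : Matrix (Fin k) (Fin l) F) :
    (∑ P : Matrix (Fin (k + 1)) (Fin (k + 1)) F,
        wt F k 0 P * (if X * (P * padE F k l) = b then 1 else 0))
      = ∑ P : Matrix (Fin (k + 1)) (Fin (k + 1)) F,
          wt F k 1 P * (if X * (P * padE F k l) = b then 1 else 0) := by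
  classical
  -- a nonzero kernel vector of X
  obtain ⟨u, hu0, hu⟩ : ∃ u : Fin (k + 1) → F, u ≠ 0 ∧ X.mulVec u = 0 := by
    by_contra hcon
    push_neg at hcon
    have hinj : Function.Injective X.mulVecLin := by
      rw [← LinearMap.ker_eq_bot, LinearMap.ker_eq_bot']
      intro u hker
      by_contra h0
      exact hcon u h0 hker
    have hle := LinearMap.finrank_le_finrank_of_injective hinj
    simp only [Module.finrank_fintype_fun_eq_card, Fintype.card_fin] at hle
    omega
  simp only [wt_eq_sum, Finset.sum_mul]
  rw [Finset.sum_comm]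
  conv_rhs => rw [Finset.sum_comm]
  refine Finset.sum_congr rfl fun Q _ => ?_
  by_cases hQ : IsUnit Q
  · -- Q invertible: shift P by a rank-one kernel matrix
    have hQu : Q.mulVec u ≠ 0 := by
      intro h
      apply hu0
      have hdet : IsUnit Q.det := (Matrix.isUnit_iff_isUnit_det Q).mp hQ
      have h1 : Q⁻¹ * Q = 1 := Matrix.nonsing_inv_mul Q hdet
      calc u = (Q⁻¹ * Q).mulVec u := by rw [h1, Matrix.one_mulVec]
        _ = Q⁻¹.mulVec (Q.mulVec u) := by rw [← Matrix.mulVec_mulVec]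
        _ = 0 := by rw [h, Matrix.mulVec_zero]
    obtain ⟨j, hj⟩ : ∃ j, Q.mulVec u j ≠ 0 := by
      by_contra h
      push_neg at h
      exact hQu (funext h)
    set d : F := (Q.mulVec u j)⁻¹ with hd
    set N : Matrix (Fin (k + 1)) (Fin (k + 1)) F :=
      fun i c => if c = j then d * u i else 0 with hN
    have hXN : X * N = 0 := by
      ext a c
      rw [Matrix.mul_apply, Matrix.zero_apply]
      have hterm : ∀ i, X a i * N i c = if c = j then d * (X a i * u i) else 0 := by
        intro i
        by_cases hc : c = j
        · simp only [hN]
          rw [if_pos hc, if_pos hc]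
          ring
        · simp only [hN]
          rw [if_neg hc, if_neg hc, mul_zero]
      rw [Finset.sum_congr rfl fun i _ => hterm i]
      by_cases hc : c = j
      · rw [Finset.sum_congr rfl fun i _ => if_pos hc, ← Finset.mul_sum]
        have hXa : (∑ i, X a i * u i) = 0 := congrFun hu a
        rw [hXa, mul_zero]
      · rw [Finset.sum_congr rfl fun i _ => if_neg hc, Finset.sum_const_zero]
    have htrN : (N * Q).trace = 1 := by
      have hdiag : ∀ i, (N * Q) i i = d * (u i * Q j i) := by
        intro i
        rw [Matrix.mul_apply]
        rw [Finset.sum_eq_single j]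
        · simp [hN]; ring
        · intro c _ hc; simp [hN, hc]
        · simp
      rw [Matrix.trace]
      simp only [Matrix.diag_apply]
      rw [Finset.sum_congr rfl fun i _ => hdiag i, ← Finset.mul_sum]
      have : ∑ i, u i * Q j i = Q.mulVec u j := by
        rw [Matrix.mulVec, dotProduct]
        exact Finset.sum_congr rfl fun i _ => mul_comm _ _
      rw [this, hd, inv_mul_cancel₀ hj]
    have htr : ∀ P : Matrix (Fin (k + 1)) (Fin (k + 1)) F,
        ((P + N) * Q).trace = (P * Q).trace + 1 := by
      intro P
      rw [Matrix.add_mul, Matrix.trace_add, htrN]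
    have hind : ∀ P : Matrix (Fin (k + 1)) (Fin (k + 1)) F,
        X * ((P + N) * padE F k l) = X * (P * padE F k l) := by
      intro P
      rw [← Matrix.mul_assoc, ← Matrix.mul_assoc, Matrix.mul_add, hXN, add_zero]
    refine Fintype.sum_bijective (· + N) (Equiv.addRight N).bijective _ _ fun P => ?_
    rw [hind, htr]
    have hcond : ((P * Q).trace + 1 = 1) = ((P * Q).trace = 0) := by
      apply propext
      constructor
      · intro h
        have h' : (P * Q).trace + 1 = 0 + 1 := by rw [zero_add]; exact h
        exact add_right_cancel h'
      · intro h; rw [h, zero_add]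
    simp only [hQ, true_and, hcond]
  · simp [hQ]

/-- Counting coordinates equal to `b` for a code built from an index equivalence. -/
lemma count_side (t : F) {n : ℕ} (e : Fin n ≃ Idx F k t)
    (X : Matrix (Fin k) (Fin (k + 1)) F) (b : Matrix (Fin k) (Fin l) F) :
    (Finset.univ.filter fun i : Fin n =>
        codeMap F k l n (fun i => coordP F k t (e i)) X i = b).card
      = (∑ P, wt F k t P * (if X * (P * padE F k l) = b then 1 else 0))
        + (if X * ((1 : Matrix (Fin (k + 1)) (Fin (k + 1)) F) * padE F k l) = b
            then 1 else 0) := by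
  classical
  rw [Finset.card_filter]
  have hcm : ∀ i : Fin n, codeMap F k l n (fun i => coordP F k t (e i)) X i
      = X * (coordP F k t (e i) * padE F k l) := fun i => rfl
  calc
    (∑ i : Fin n, if codeMap F k l n (fun i => coordP F k t (e i)) X i = b then 1 else 0)
        = ∑ i : Fin n,
            (fun j : Idx F k t => if X * (coordP F k t j * padE F k l) = b then 1 else 0)
              (e i) := by
          refine Finset.sum_congr rfl fun i _ => ?_
          rw [hcm]
    _ = ∑ j : Idx F k t,
          (if X * (coordP F k t j * padE F k l) = b then 1 else 0) :=
        Equiv.sum_comp e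
          (fun j => if X * (coordP F k t j * padE F k l) = b then 1 else 0)
    _ = (∑ P, wt F k t P * (if X * (P * padE F k l) = b then 1 else 0))
        + (if X * ((1 : Matrix (Fin (k + 1)) (Fin (k + 1)) F) * padE F k l) = b
            then 1 else 0) := by
        rw [Fintype.sum_sum_type]
        congr 1
        · rw [← Finset.univ_sigma_univ, Finset.sum_sigma]
          refine Finset.sum_congr rfl fun P _ => ?_
          have hbody : ∀ m : Fin (wt F k t P),
              (if X * (coordP F k t (Sum.inl ⟨P, m⟩) * padE F k l) = b then (1 : ℕ) else 0)
                = if X * (P * padE F k l) = b then 1 else 0 := fun m => rfl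
          rw [Finset.sum_congr rfl fun m _ => hbody m, Finset.sum_const, Finset.card_univ,
            Fintype.card_fin, smul_eq_mul]

lemma natCard_filter {n : ℕ} (v : Fin n → Matrix (Fin k) (Fin l) F)
    (b : Matrix (Fin k) (Fin l) F) :
    Nat.card {i : Fin n // v i = b} = (Finset.univ.filter fun i => v i = b).card := by
  classical
  rw [Nat.card_eq_fintype_card, Fintype.card_subtype]

/-- If all left multiples of `M` vanish, `M = 0` (needs `0 < k`). -/
lemma left_mul_kill (hk : 0 < k) {r : ℕ} (M : Matrix (Fin (k + 1)) (Fin r) F)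
    (h : ∀ X : Matrix (Fin k) (Fin (k + 1)) F, X * M = 0) : M = 0 := by
  classical
  ext t j
  have hX := h (Matrix.of fun _ i => if i = t then 1 else 0)
  have := congrArg (fun A : Matrix (Fin k) (Fin r) F => A ⟨0, hk⟩ j) hX
  simp only [Matrix.mul_apply] at this
  rw [Finset.sum_eq_single t] at this
  · simpa using this
  · intro c _ hc; simp [hc]
  · simp

lemma count_main (hl : k < l) {n : ℕ} (e0 : Fin n ≃ Idx F k (0 : F))
    (e1 : Fin n ≃ Idx F k (1 : F)) (X : Matrix (Fin k) (Fin (k + 1)) F)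
    (b : Matrix (Fin k) (Fin l) F) :
    Nat.card {i : Fin n // codeMap F k l n (fun i => coordP F k 0 (e0 i)) X i = b}
      = Nat.card {i : Fin n // codeMap F k l n (fun i => coordP F k 1 (e1 i)) X i = b} := by
  rw [natCard_filter, natCard_filter,
    count_side F k l 0 e0 X b, count_side F k l 1 e1 X b]
  exact congrArg (· + _) (key_count F k l X b)

theorem main_aux (hk : 0 < k) (l : ℕ) (hl : l > k) :
    ∃ n : ℕ, 0 < n ∧
      ∃ C : Submodule (Matrix (Fin k) (Fin k) F) (Fin n → Matrix (Fin k) (Fin l) F),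
        ∃ f : C →ₗ[Matrix (Fin k) (Fin k) F] (Fin n → Matrix (Fin k) (Fin l) F),
          Function.Injective f ∧
          (∀ (a : C) (b : Matrix (Fin k) (Fin l) F),
            Nat.card {i : Fin n // (a : Fin n → Matrix (Fin k) (Fin l) F) i = b} =
              Nat.card {i : Fin n // f a i = b}) ∧
          ¬ ∃ (π : Equiv.Perm (Fin n))
              (g : Fin n →
                (Matrix (Fin k) (Fin l) F ≃ₗ[Matrix (Fin k) (Fin k) F] Matrix (Fin k) (Fin l) F)),
              ∀ (a : C) (i : Fin n),
                f a i = (g i) ((a : Fin n → Matrix (Fin k) (Fin l) F) (π i)) := by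
  set n := Fintype.card (Idx F k (0 : F)) with hn
  have hkey0 : (∑ P, wt F k (0 : F) P) = ∑ P, wt F k (1 : F) P := by
    have hkey := key_count F k l 0 0
    simpa [Matrix.zero_mul] using hkey
  have hcard1 : Fintype.card (Idx F k (1 : F)) = n := by
    rw [hn, card_Idx, card_Idx, hkey0]
  have e0 : Fin n ≃ Idx F k (0 : F) := (Fintype.equivFinOfCardEq hn.symm).symm
  have e1 : Fin n ≃ Idx F k (1 : F) := (Fintype.equivFinOfCardEq hcard1).symm
  set c0 : Fin n → Matrix (Fin (k + 1)) (Fin (k + 1)) F := fun i => coordP F k 0 (e0 i)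
    with hc0
  set c1 : Fin n → Matrix (Fin (k + 1)) (Fin (k + 1)) F := fun i => coordP F k 1 (e1 i)
    with hc1
  set φ := codeMap F k l n c0 with hφ
  set ψ := codeMap F k l n c1 with hψ
  have hφinj : Function.Injective φ :=
    codeMap_inj F k l hl c0 (e0.symm (Sum.inr ())) (by simp [hc0, coordP])
  have hψinj : Function.Injective ψ :=
    codeMap_inj F k l hl c1 (e1.symm (Sum.inr ())) (by simp [hc1, coordP])
  set eφ := LinearEquiv.ofInjective φ hφinj with heφ
  refine ⟨n, ?_, LinearMap.range φ, ψ.comp (eφ.symm.toLinearMap), ?_, ?_, ?_⟩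
  · -- 0 < n
    rw [hn]
    exact Fintype.card_pos_iff.mpr ⟨Sum.inr ()⟩
  · -- injectivity
    intro x y hxy
    have hxy' : ψ (eφ.symm x) = ψ (eφ.symm y) := hxy
    exact eφ.symm.injective (hψinj hxy')
  · -- count preservation
    intro a b
    obtain ⟨X, hX⟩ := a.2
    have ha : eφ X = a := Subtype.ext hX
    have hfa : (ψ.comp (eφ.symm.toLinearMap)) a = ψ X := by
      rw [← ha]
      simp only [LinearMap.comp_apply, LinearEquiv.coe_toLinearMap,
        LinearEquiv.symm_apply_apply]
    have hav : (a : Fin n → Matrix (Fin k) (Fin l) F) = φ X := hX.symm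
    rw [hfa, hav, hφ, hψ, hc0, hc1]
    exact count_main F k l hl e0 e1 X b
  · -- non-extendability
    rintro ⟨π, g, hg⟩
    have h0pos : 0 < wt F k (0 : F) (0 : Matrix (Fin (k + 1)) (Fin (k + 1)) F) := by
      refine Finset.card_pos.mpr ⟨1, ?_⟩
      simp [wt, isUnit_one]
    set iG : Fin n := e0.symm (Sum.inl ⟨0, ⟨0, h0pos⟩⟩) with hiGdef
    have hiG : c0 iG = 0 := by simp [hc0, hiGdef, coordP]
    set i1 : Fin n := π.symm iG with hi1
    have hall : ∀ X : Matrix (Fin k) (Fin (k + 1)) F,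
        X * (c1 i1 * padE F k l) = 0 := by
      intro X
      have h := hg (eφ X) i1
      have hfeq : (ψ.comp (eφ.symm.toLinearMap)) (eφ X) = ψ X := by
        simp only [LinearMap.comp_apply, LinearEquiv.coe_toLinearMap,
          LinearEquiv.symm_apply_apply]
      rw [hfeq] at h
      have hval : ((eφ X : LinearMap.range φ) : Fin n → Matrix (Fin k) (Fin l) F) = φ X :=
        rfl
      rw [hval] at h
      have hπ : φ X (π i1) = 0 := by
        show X * (c0 (π i1) * padE F k l) = 0
        rw [hi1, Equiv.apply_symm_apply, hiG, Matrix.zero_mul, Matrix.mul_zero]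
      rw [hπ, map_zero] at h
      exact h
    have hc1i1 : c1 i1 = 0 := by
      have hz : c1 i1 * padE F k l = 0 := left_mul_kill F k hk _ hall
      exact padE_mul_inj F k l hl (hz.trans (Matrix.zero_mul (padE F k l)).symm)
    rcases hj : e1 i1 with ⟨P, mfin⟩ | u
    · have hP : c1 i1 = P := by simp [hc1, hj, coordP]
      have hwpos : 0 < wt F k (1 : F) P := mfin.pos
      obtain ⟨Q, hQ⟩ := Finset.card_pos.mp hwpos
      rw [Finset.mem_filter] at hQ
      have htr : (P * Q).trace = 1 := hQ.2.2
      rw [← hP, hc1i1, Matrix.zero_mul, Matrix.trace_zero] at htr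
      exact zero_ne_one htr
    · have hP : c1 i1 = 1 := by simp [hc1, hj, coordP]
      rw [hc1i1] at hP
      have h00 := congrFun (congrFun hP ⟨0, Nat.succ_pos k⟩) ⟨0, Nat.succ_pos k⟩
      simp [Matrix.one_apply] at h00

end Construction

/-- Let `R = M_{k×k}(F_q)` and `A = M_{k×ℓ}(F_q)` with `ℓ > k`. Then there exist a
positive integer `n`, an `R`-linear code `C ⊆ A^n` and an injective `R`-linear map
`f : C → A^n` preserving, for every `b ∈ A`, the number of coordinates equal to `b`
(hence an `swc_G`-isometry for every `G ≤ Aut_R(A)`), yet `f` is not the restriction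
of any monomial map built from a permutation and automorphisms of `A`. -/
theorem exists_unextendable_swcG_isometry (hk : 0 < k) (l : ℕ) (hl : l > k) :
    ∃ n : ℕ, 0 < n ∧
      ∃ C : Submodule (Matrix (Fin k) (Fin k) F) (Fin n → Matrix (Fin k) (Fin l) F),
        ∃ f : C →ₗ[Matrix (Fin k) (Fin k) F] (Fin n → Matrix (Fin k) (Fin l) F),
          Function.Injective f ∧
          (∀ (a : C) (b : Matrix (Fin k) (Fin l) F),
            Nat.card {i : Fin n // (a : Fin n → Matrix (Fin k) (Fin l) F) i = b} =
              Nat.card {i : Fin n // f a i = b}) ∧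
          ¬ ∃ (π : Equiv.Perm (Fin n))
              (g : Fin n →
                (Matrix (Fin k) (Fin l) F ≃ₗ[Matrix (Fin k) (Fin k) F] Matrix (Fin k) (Fin l) F)),
              ∀ (a : C) (i : Fin n),
                f a i = (g i) ((a : Fin n → Matrix (Fin k) (Fin l) F) (π i)) := by
  letI : DecidableEq F := Classical.decEq F
  exact main_aux F k hk l hl
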